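/- Let d ≥ 1, λ ∈ (0, 1/8], x₀ ∈ ℝ^d, r > 0, and let ξ₀ ∈ ℝ^d with |ξ₀| = 1. Set x̃₀ = x₀ - (r/2) ξ₀. Then for all u ∈ B(x₀, 2λr) and all v ∈ B(x̃₀, 2λr), one has |⟨u - v, ξ₀⟩| ≥ √(1 - (8λ)²) · |u - v|. -/

import Mathlib

open MeasureTheory Topology Filter

/-- The cone estimate (2.2): for `λ ∈ (0, 1/8]`, a unit vector `ξ₀`,
`x̃₀ = x₀ - (r/2) ξ₀`, every `u ∈ B(x₀, 2λr)` and `v ∈ B(x̃₀, 2λr)` satisfy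
`|⟨u - v, ξ₀⟩| ≥ √(1 - (8λ)²) |u - v|`. -/
theorem stmt_5 (d : ℕ) (hd : 1 ≤ d) (lam : ℝ) (hlam : lam ∈ Set.Ioc (0:ℝ) (1/8))
    (x₀ : EuclideanSpace ℝ (Fin d)) (r : ℝ) (hr : 0 < r)
    (ξ₀ : EuclideanSpace ℝ (Fin d)) (hξ₀ : ‖ξ₀‖ = 1) :
    ∀ u ∈ Metric.ball x₀ (2 * lam * r),
      ∀ v ∈ Metric.ball (x₀ - (r / 2) • ξ₀) (2 * lam * r),
        Real.sqrt (1 - (8 * lam) ^ 2) * ‖u - v‖ ≤ |(inner ℝ (u - v) ξ₀ : ℝ)| := by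
  obtain ⟨hlam0, hlam8⟩ := hlam
  intro u hu v hv
  rw [Metric.mem_ball, dist_eq_norm] at hu hv
  set a : EuclideanSpace ℝ (Fin d) := (u - x₀) - (v - (x₀ - (r / 2) • ξ₀)) with ha_def
  have hw : u - v = a + (r / 2) • ξ₀ := by rw [ha_def]; module
  have ha : ‖a‖ ≤ 4 * lam * r := by
    calc ‖a‖ ≤ ‖u - x₀‖ + ‖v - (x₀ - (r / 2) • ξ₀)‖ := norm_sub_le _ _
    _ ≤ 2 * lam * r + 2 * lam * r := by linarith
    _ = 4 * lam * r := by ring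
  set t : ℝ := inner ℝ a ξ₀ with ht_def
  have hξ1 : (inner ℝ ξ₀ ξ₀ : ℝ) = 1 := by
    rw [real_inner_self_eq_norm_sq, hξ₀]; norm_num
  have hc : (inner ℝ (u - v) ξ₀ : ℝ) = t + r / 2 := by
    rw [hw, inner_add_left, real_inner_smul_left, hξ1, ht_def]; ring
  have hnorm : ‖u - v‖ ^ 2 = ‖a‖ ^ 2 + r * t + (r / 2) ^ 2 := by
    rw [hw, norm_add_sq_real, real_inner_smul_right, norm_smul, Real.norm_eq_abs, hξ₀,
      abs_of_pos (by linarith : (0:ℝ) < r / 2)]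
    ring
  have hts : t ^ 2 ≤ ‖a‖ ^ 2 := by
    have h1 : |t| ≤ ‖a‖ * ‖ξ₀‖ := abs_real_inner_le_norm a ξ₀
    rw [hξ₀, mul_one] at h1
    nlinarith [abs_nonneg t, sq_abs t]
  have hμ : 1 - (8 * lam) ^ 2 ≥ 0 := by nlinarith
  have key : (1 - (8 * lam) ^ 2) * ‖u - v‖ ^ 2 ≤ (t + r / 2) ^ 2 := by
    rw [hnorm]
    have hna : ‖a‖ ^ 2 ≤ (4 * lam * r) ^ 2 := by
      nlinarith [norm_nonneg a]
    nlinarith [sq_nonneg (t + (8 * lam) ^ 2 * r / 2)]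
  calc Real.sqrt (1 - (8 * lam) ^ 2) * ‖u - v‖
      = Real.sqrt ((1 - (8 * lam) ^ 2) * ‖u - v‖ ^ 2) := by
        rw [Real.sqrt_mul hμ, Real.sqrt_sq (norm_nonneg _)]
    _ ≤ Real.sqrt ((t + r / 2) ^ 2) := Real.sqrt_le_sqrt key
    _ = |t + r / 2| := Real.sqrt_sq_eq_abs _
    _ = |(inner ℝ (u - v) ξ₀ : ℝ)| := by rw [hc]
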